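/- If v^n satisfies D^α_τ v^n + λ v^n = 0 for all n ≥ 1 with λ ≥ 0 and v^0 ≥ 0, then 0 ≤ v^n ≤ v^0 for all n (discrete maximum principle for the L1 scheme). -/

import Mathlib

/-- Coefficient `ζ^{(α)}_k = (k+1)^{1-α} - k^{1-α}` of the L1 scheme. -/
noncomputable def zetaW (α : ℝ) (k : ℕ) : ℝ :=
  ((k : ℝ) + 1) ^ (1 - α) - (k : ℝ) ^ (1 - α)

/-- L1 discrete Caputo derivative at step `n ≥ 1` with time step `τ`. -/
noncomputable def l1Caputo (α τ : ℝ) (v : ℕ → ℝ) (n : ℕ) : ℝ :=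
  (1 / (τ ^ α * Real.Gamma (2 - α))) *
    (v n - v (n - 1) + ∑ j ∈ Finset.Icc 2 n, zetaW α (j - 1) * (v (n - j + 1) - v (n - j)))

lemma abel_identity (a w : ℕ → ℝ) :
    ∀ n : ℕ, 1 ≤ n →
      ∑ j ∈ Finset.Icc 1 n, a (j - 1) * (w (j - 1) - w j)
        = a 0 * w 0 + (∑ i ∈ Finset.Icc 1 (n - 1), (a i - a (i - 1)) * w i)
            - a (n - 1) * w n := by
  intro n hn
  induction n, hn using Nat.le_induction with
  | base => simp; ring
  | succ n hn ih =>
    rw [Finset.sum_Icc_succ_top (by omega)]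
    have h1 : (n + 1 : ℕ) - 1 = n := by omega
    have h2 : n - 1 + 1 = n := by omega
    rw [ih, h1]
    have : ∑ i ∈ Finset.Icc 1 n, (a i - a (i - 1)) * w i
        = (∑ i ∈ Finset.Icc 1 (n - 1), (a i - a (i - 1)) * w i)
            + (a n - a (n - 1)) * w n := by
      conv_lhs => rw [← h2]
      rw [Finset.sum_Icc_succ_top (by omega), h2]
    rw [this]
    ring

lemma zetaW_nonneg {α : ℝ} (hα1 : α < 1) (k : ℕ) : 0 ≤ zetaW α k := by
  have : (k : ℝ) ^ (1 - α) ≤ ((k : ℝ) + 1) ^ (1 - α) :=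
    Real.rpow_le_rpow (Nat.cast_nonneg k) (by linarith) (by linarith)
  simpa [zetaW] using this

lemma zetaW_anti {α : ℝ} (hα0 : 0 < α) (hα1 : α < 1) (k : ℕ) :
    zetaW α (k + 1) ≤ zetaW α k := by
  have hcc := Real.concaveOn_rpow (p := 1 - α) (by linarith) (by linarith)
  have h := hcc.2 (Set.mem_Ici.2 (Nat.cast_nonneg k))
    (Set.mem_Ici.2 (by positivity : (0:ℝ) ≤ (k : ℝ) + 2))
    (by norm_num : (0:ℝ) ≤ 1/2) (by norm_num : (0:ℝ) ≤ 1/2) (by norm_num : (1:ℝ)/2 + 1/2 = 1)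
  have hx : (1/2 : ℝ) • (k : ℝ) + (1/2 : ℝ) • ((k : ℝ) + 2) = (k : ℝ) + 1 := by
    simp [smul_eq_mul]; ring
  rw [hx] at h
  simp only [smul_eq_mul] at h
  simp only [zetaW]
  push_cast
  rw [show ((k:ℝ) + 1 + 1) = (k:ℝ) + 2 from by ring]
  linarith

theorem l1_discrete_maximum_principle (α τ lam : ℝ) (hα0 : 0 < α) (hα1 : α < 1)
    (hτ : 0 < τ) (hlam : 0 ≤ lam) (v : ℕ → ℝ)
    (hscheme : ∀ n : ℕ, 1 ≤ n → l1Caputo α τ v n + lam * v n = 0)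
    (hv0 : 0 ≤ v 0) :
    ∀ n : ℕ, 0 ≤ v n ∧ v n ≤ v 0 := by
  intro n
  induction n using Nat.strong_induction_on with
  | _ n ih =>
  rcases Nat.eq_zero_or_pos n with rfl | hn
  · exact ⟨hv0, le_refl _⟩
  -- constants
  set c : ℝ := 1 / (τ ^ α * Real.Gamma (2 - α)) with hc_def
  have hc : 0 < c := by
    have h1 : (0:ℝ) < τ ^ α := Real.rpow_pos_of_pos hτ α
    have h2 : 0 < Real.Gamma (2 - α) := Real.Gamma_pos_of_pos (by linarith)
    positivity
  have hz0 : zetaW α 0 = 1 := by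
    simp [zetaW, Real.zero_rpow (by linarith : (1:ℝ) - α ≠ 0)]
  -- rewrite the scheme bracket using the Abel identity
  have hbr : v n - v (n - 1) + ∑ j ∈ Finset.Icc 2 n, zetaW α (j - 1) * (v (n - j + 1) - v (n - j))
      = ∑ j ∈ Finset.Icc 1 n, zetaW α (j - 1) * (v (n - (j - 1)) - v (n - j)) := by
    have hins : Finset.Icc 1 n = insert 1 (Finset.Icc 2 n) := by
      ext x; simp only [Finset.mem_Icc, Finset.mem_insert]; omega
    rw [hins, Finset.sum_insert (by simp)]
    have h1 : zetaW α (1 - 1) * (v (n - (1 - 1)) - v (n - 1)) = v n - v (n - 1) := by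
      norm_num [hz0]
    rw [h1]
    congr 1
    apply Finset.sum_congr rfl
    intro j hj
    simp only [Finset.mem_Icc] at hj
    have : n - j + 1 = n - (j - 1) := by omega
    rw [this]
  have habel := abel_identity (zetaW α) (fun i => v (n - i)) n hn
  simp only [Nat.sub_self, hz0, one_mul] at habel
  -- the coefficient sum
  set T : ℝ := ∑ i ∈ Finset.Icc 1 (n - 1), (zetaW α (i - 1) - zetaW α i) * v (n - i) with hT
  have hS : v n - v (n - 1) + ∑ j ∈ Finset.Icc 2 n, zetaW α (j - 1) * (v (n - j + 1) - v (n - j))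
      = v n - T - zetaW α (n - 1) * v 0 := by
    rw [hbr, habel]
    have hsum : (∑ x ∈ Finset.Icc 1 (n - 1), (zetaW α x - zetaW α (x - 1)) * v (n - x)) + T = 0 := by
      rw [hT, ← Finset.sum_add_distrib]
      apply Finset.sum_eq_zero; intro i _; ring
    simp only [Nat.sub_zero]
    linarith [hsum]
  have hkey : (c + lam) * v n = c * (T + zetaW α (n - 1) * v 0) := by
    have := hscheme n hn
    rw [l1Caputo, ← hc_def, hS] at this
    linarith
  -- bounds on T
  have hTnonneg : 0 ≤ T := by
    apply Finset.sum_nonneg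
    intro i hi
    simp only [Finset.mem_Icc] at hi
    have hcoef : 0 ≤ zetaW α (i - 1) - zetaW α i := by
      have := zetaW_anti hα0 hα1 (i - 1)
      have : i - 1 + 1 = i := by omega
      have := zetaW_anti hα0 hα1 (i - 1)
      rw [show i - 1 + 1 = i by omega] at this
      linarith
    exact mul_nonneg hcoef (ih (n - i) (by omega)).1
  have hcoefsum : (∑ i ∈ Finset.Icc 1 (n - 1), (zetaW α (i - 1) - zetaW α i))
      = 1 - zetaW α (n - 1) := by
    have : ∀ m : ℕ, (∑ i ∈ Finset.Icc 1 m, (zetaW α (i - 1) - zetaW α i))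
        = zetaW α 0 - zetaW α m := by
      intro m
      induction m with
      | zero => simp
      | succ m ihm =>
        rw [Finset.sum_Icc_succ_top (by omega), ihm]
        simp
    rw [this, hz0]
  have hTle : T ≤ (1 - zetaW α (n - 1)) * v 0 := by
    rw [← hcoefsum, Finset.sum_mul]
    apply Finset.sum_le_sum
    intro i hi
    simp only [Finset.mem_Icc] at hi
    have hcoef : 0 ≤ zetaW α (i - 1) - zetaW α i := by
      have := zetaW_anti hα0 hα1 (i - 1)
      rw [show i - 1 + 1 = i by omega] at this
      linarith
    exact mul_le_mul_of_nonneg_left (ih (n - i) (by omega)).2 hcoef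
  have hznn := zetaW_nonneg hα1 (n - 1)
  have hclam : 0 < c + lam := by linarith
  constructor
  · have hRHS : 0 ≤ c * (T + zetaW α (n - 1) * v 0) := mul_nonneg hc.le (add_nonneg hTnonneg (mul_nonneg hznn hv0))
    nlinarith [hkey]
  · have hRHS : c * (T + zetaW α (n - 1) * v 0) ≤ (c + lam) * v 0 := by
      have h1 : T + zetaW α (n - 1) * v 0 ≤ v 0 := by nlinarith
      nlinarith
    nlinarith [hkey]
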